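/- Fix an integer n ≥ 1. Then limsup of b(α,θ) · Σ_{i=1}^n log((θ+iα)/(θ+iα+1−α)) is at most −n, where the limsup is taken as a(α,θ) → 0 over pairs (α,θ) with α ∈ (0,1) and θ + α > 0. -/

import Mathlib

open MeasureTheory Filter Set

/-- `a(α,θ) = max(α, |θ|)`. -/
noncomputable def aParam (α θ : ℝ) : ℝ := max α |θ|

/-- `b(α,θ) = (-log a(α,θ))⁻¹`. -/
noncomputable def bParam (α θ : ℝ) : ℝ := (-Real.log (aParam α θ))⁻¹

/-- The filter describing `a(α,θ) → 0` over pairs `(α,θ)` with `α ∈ (0,1)` and `θ + α > 0`. -/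
noncomputable def smallParamFilter : Filter (ℝ × ℝ) :=
  (Filter.comap (fun p : ℝ × ℝ => aParam p.1 p.2) (nhdsWithin 0 (Set.Ioi 0))) ⊓
    Filter.principal {p : ℝ × ℝ | p.1 ∈ Set.Ioo (0:ℝ) 1 ∧ 0 < p.1 + p.2}

lemma tendsto_aParam :
    Tendsto (fun p : ℝ × ℝ => aParam p.1 p.2) smallParamFilter (nhdsWithin 0 (Ioi 0)) := by
  rw [smallParamFilter]
  exact tendsto_comap.mono_left inf_le_left

lemma smallParamFilter_neBot : smallParamFilter.NeBot := by
  have h : Tendsto (fun k : ℕ => ((((k:ℝ)+2)⁻¹ : ℝ), (0:ℝ))) atTop smallParamFilter := by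
    rw [smallParamFilter, tendsto_inf]
    have hpos : ∀ k : ℕ, (0:ℝ) < ((k:ℝ)+2)⁻¹ := fun k => by positivity
    have hlt : ∀ k : ℕ, ((k:ℝ)+2)⁻¹ < 1 := fun k => by
      rw [inv_lt_one_iff₀]; right; linarith [Nat.cast_nonneg (α := ℝ) k]
    constructor
    · rw [tendsto_comap_iff]
      have heq : ((fun p : ℝ × ℝ => aParam p.1 p.2) ∘ (fun k : ℕ => ((((k:ℝ)+2)⁻¹ : ℝ), (0:ℝ))))
          = fun k : ℕ => ((k:ℝ)+2)⁻¹ := by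
        funext k; simp [aParam, Function.comp, le_of_lt (hpos k)]
      rw [heq, tendsto_nhdsWithin_iff]
      constructor
      · have : Tendsto (fun k : ℕ => (k:ℝ) + 2) atTop atTop :=
          tendsto_atTop_add_const_right _ _ tendsto_natCast_atTop_atTop
        exact this.inv_tendsto_atTop
      · exact Eventually.of_forall fun k => hpos k
    · rw [tendsto_principal]
      exact Eventually.of_forall fun k => ⟨⟨hpos k, hlt k⟩, by simpa using hpos k⟩
  exact h.neBot

lemma pointwise_bound (n : ℕ) (α θ : ℝ) (hα0 : 0 < α)
    (hθα : 0 < α + θ) (ha : aParam α θ < 1/2) :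
    bParam α θ * ∑ i ∈ Finset.range n,
        Real.log ((θ + (i + 1) * α) / (θ + (i + 1) * α + 1 - α))
      ≤ -(n:ℝ) + n * bParam α θ * Real.log ((n+1) / (1 - aParam α θ)) := by
  set a := aParam α θ with ha_def
  have ha0 : 0 < a := lt_of_lt_of_le hα0 (le_max_left _ _)
  have hαa : α ≤ a := le_max_left _ _
  have hθa : |θ| ≤ a := le_max_right _ _
  have hθ_ge : -a ≤ θ := neg_le_of_abs_le hθa
  have hθ_le : θ ≤ a := le_of_abs_le hθa
  have hloga : Real.log a < 0 := Real.log_neg ha0 (by linarith)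
  have hb : 0 < bParam α θ := inv_pos.2 (by rw [← ha_def]; linarith)
  have hc0 : (0:ℝ) < (n+1) / (1 - a) := by
    apply div_pos (by positivity) (by linarith)
  have hterm : ∀ i ∈ Finset.range n,
      Real.log ((θ + (i + 1) * α) / (θ + (i + 1) * α + 1 - α))
        ≤ Real.log ((n+1) * a / (1 - a)) := by
    intro i hi
    have hin : (i:ℝ) + 1 ≤ n := by
      have := Finset.mem_range.1 hi
      exact_mod_cast Nat.succ_le_of_lt this
    have hx : 0 < θ + ((i:ℝ) + 1) * α := by
      have : (0:ℝ) ≤ (i:ℝ) * α := by positivity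
      nlinarith
    have hd : 1 - a ≤ θ + ((i:ℝ) + 1) * α + 1 - α := by
      have : (0:ℝ) ≤ (i:ℝ) * α := by positivity
      nlinarith
    have hxu : θ + ((i:ℝ) + 1) * α ≤ (n+1) * a := by
      have h1 : ((i:ℝ) + 1) * α ≤ (n:ℝ) * a :=
        mul_le_mul hin hαa (le_of_lt hα0) (Nat.cast_nonneg n)
      nlinarith
    have hd0 : (0:ℝ) < θ + ((i:ℝ) + 1) * α + 1 - α := by linarith
    apply Real.log_le_log (div_pos hx hd0)
    exact div_le_div₀ (by positivity) hxu (by linarith) hd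
  have hsum : ∑ i ∈ Finset.range n,
      Real.log ((θ + (i + 1) * α) / (θ + (i + 1) * α + 1 - α))
        ≤ (n:ℝ) * Real.log ((n+1) * a / (1 - a)) := by
    calc _ ≤ ∑ _i ∈ Finset.range n, Real.log ((n+1) * a / (1 - a)) :=
          Finset.sum_le_sum hterm
      _ = (n:ℝ) * Real.log ((n+1) * a / (1 - a)) := by
          rw [Finset.sum_const, Finset.card_range, nsmul_eq_mul]
  have hlogsplit : Real.log ((n+1) * a / (1 - a)) = Real.log a + Real.log ((n+1)/(1-a)) := by
    rw [show ((n:ℝ)+1) * a / (1 - a) = a * ((n+1)/(1-a)) by ring,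
      Real.log_mul (ne_of_gt ha0) (ne_of_gt hc0)]
  have hba : bParam α θ * Real.log a = -1 := by
    rw [bParam, ← ha_def]
    field_simp
    rw [div_self hloga.ne]
  calc bParam α θ * ∑ i ∈ Finset.range n,
        Real.log ((θ + (i + 1) * α) / (θ + (i + 1) * α + 1 - α))
      ≤ bParam α θ * ((n:ℝ) * Real.log ((n+1) * a / (1 - a))) :=
        (mul_le_mul_of_nonneg_left hsum (le_of_lt hb))
    _ = (n:ℝ) * (bParam α θ * Real.log a) + n * bParam α θ * Real.log ((n+1)/(1-a)) := by
        rw [hlogsplit]; ring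
    _ = -(n:ℝ) + n * bParam α θ * Real.log ((n+1) / (1 - a)) := by rw [hba]; ring

lemma tendsto_bParam : Tendsto (fun p : ℝ × ℝ => bParam p.1 p.2) smallParamFilter (nhds 0) := by
  have h1 : Tendsto (fun a : ℝ => (-Real.log a)⁻¹) (nhdsWithin 0 (Ioi 0)) (nhds 0) := by
    have h2 : Tendsto (fun a : ℝ => -Real.log a) (nhdsWithin 0 (Ioi 0)) atTop :=
      tendsto_neg_atBot_atTop.comp Real.tendsto_log_nhdsGT_zero
    exact h2.inv_tendsto_atTop
  exact h1.comp tendsto_aParam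

/-- For fixed `n ≥ 1`,
`limsup b(α,θ) ∑_{i=1}^n log((θ+iα)/(θ+iα+1-α)) ≤ -n` as `a(α,θ) → 0` over pairs `(α,θ)`
with `α ∈ (0,1)` and `θ + α > 0`. -/
theorem limsup_log_prod_ratio_le (n : ℕ) (hn : 1 ≤ n) :
    Filter.limsup
      (fun p : ℝ × ℝ =>
        ((bParam p.1 p.2 *
          ∑ i ∈ Finset.range n,
            Real.log ((p.2 + (i + 1) * p.1) / (p.2 + (i + 1) * p.1 + 1 - p.1)) : ℝ) : EReal))
      smallParamFilter ≤ (-(n : ℝ) : EReal) := by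
  haveI := smallParamFilter_neBot
  set g : ℝ × ℝ → ℝ := fun p =>
    -(n:ℝ) + n * bParam p.1 p.2 * Real.log ((n+1) / (1 - aParam p.1 p.2)) with hg_def
  -- g tends to -n
  have hgtendsto : Tendsto g smallParamFilter (nhds (-(n:ℝ))) := by
    have hlog : Tendsto (fun p : ℝ × ℝ => Real.log ((n+1) / (1 - aParam p.1 p.2)))
        smallParamFilter (nhds (Real.log (n+1))) := by
      have h1 : Tendsto (fun a : ℝ => ((n:ℝ)+1) / (1 - a)) (nhds 0) (nhds ((n:ℝ)+1)) := by
        have := (tendsto_const_nhds (x := ((n:ℝ)+1)) (f := nhds (0:ℝ))).div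
          ((tendsto_const_nhds (x := (1:ℝ))).sub tendsto_id) (by norm_num)
        simpa [Pi.div_def] using this
      have h2 : Tendsto (fun a : ℝ => Real.log (((n:ℝ)+1) / (1 - a))) (nhds 0)
          (nhds (Real.log ((n:ℝ)+1))) :=
        ((Real.continuousAt_log (by positivity)).tendsto).comp h1
      exact h2.comp (tendsto_aParam.mono_right nhdsWithin_le_nhds)
    have := tendsto_const_nhds (x := -(n:ℝ)) (f := smallParamFilter) |>.add
      (((tendsto_const_nhds (x := (n:ℝ))).mul tendsto_bParam).mul hlog)
    simpa using this
  have hgE : Tendsto (fun p => ((g p : ℝ) : EReal)) smallParamFilter (nhds ((-(n:ℝ) : ℝ) : EReal)) :=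
    (continuous_coe_real_ereal.tendsto _).comp hgtendsto
  -- eventual bound
  have hev : ∀ᶠ p in smallParamFilter,
      ((bParam p.1 p.2 *
          ∑ i ∈ Finset.range n,
            Real.log ((p.2 + (i + 1) * p.1) / (p.2 + (i + 1) * p.1 + 1 - p.1)) : ℝ) : EReal)
        ≤ ((g p : ℝ) : EReal) := by
    have h1 : ∀ᶠ p : ℝ × ℝ in smallParamFilter, p.1 ∈ Ioo (0:ℝ) 1 ∧ 0 < p.1 + p.2 := by
      rw [smallParamFilter]
      exact mem_inf_of_right (mem_principal_self _)
    have h2 : ∀ᶠ p : ℝ × ℝ in smallParamFilter, aParam p.1 p.2 ∈ Ioo (0:ℝ) (1/2) :=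
      tendsto_aParam.eventually_mem (Ioo_mem_nhdsGT (by norm_num))
    filter_upwards [h1, h2] with p hp1 hp2
    rw [EReal.coe_le_coe_iff]
    exact pointwise_bound n p.1 p.2 hp1.1.1 hp1.2 hp2.2
  calc Filter.limsup _ smallParamFilter
      ≤ Filter.limsup (fun p => ((g p : ℝ) : EReal)) smallParamFilter :=
        limsup_le_limsup hev
    _ = ((-(n:ℝ) : ℝ) : EReal) := hgE.limsup_eq
    _ = (-(n : ℝ) : EReal) := by norm_num
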